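/- For any scalars u, v with v ∉ {−1,−2,…,−7}, u ≠ v, u ≠ v+1, the sequence b_i = 6(u+i)/((v+i)(v+i+1)), i = 1,…,6, satisfies the four equations: b_4(b_1−b_2)−b_1(b_3−b_4) = b_1−3b_2+3b_3−b_4; b_5(b_2−b_3)−b_2(b_4−b_5) = b_2−3b_3+3b_4−b_5; b_6(b_3−b_4)−b_3(b_5−b_6) = b_3−3b_4+3b_5−b_6; and b_6(b_1−3b_2+3b_3−b_4)−b_1(b_3−3b_4+3b_5−b_6) = (9/10)(b_1−5b_2+10b_3−10b_4+5b_5−b_6). -/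

import Mathlib

/-- The defining equations `R⁵₁, R⁵₂, R⁵₃, R⁷₁` of 8-dimensional graded thread
`W⁺`-modules of type `(1,1,…,1)`. -/
def Rsys {K : Type*} [Field K] (b1 b2 b3 b4 b5 b6 : K) : Prop :=
  (b4 * (b1 - b2) - b1 * (b3 - b4) = b1 - 3 * b2 + 3 * b3 - b4) ∧
  (b5 * (b2 - b3) - b2 * (b4 - b5) = b2 - 3 * b3 + 3 * b4 - b5) ∧
  (b6 * (b3 - b4) - b3 * (b5 - b6) = b3 - 3 * b4 + 3 * b5 - b6) ∧
  (b6 * (b1 - 3 * b2 + 3 * b3 - b4) - b1 * (b3 - 3 * b4 + 3 * b5 - b6) =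
    (9 / 10) * (b1 - 5 * b2 + 10 * b3 - 10 * b4 + 5 * b5 - b6))

set_option maxHeartbeats 1000000 in
/-- the family `b_i = 6(u+i)/((v+i)(v+i+1))` satisfies the system. -/
theorem stmt_4 {K : Type*} [Field K] [CharZero K] (u v : K)
    (hv : ∀ i : ℕ, 1 ≤ i → i ≤ 7 → v + (i : K) ≠ 0)
    (hu1 : u ≠ v) (hu2 : u ≠ v + 1)
    (b : ℕ → K)
    (hb : ∀ i : ℕ, 1 ≤ i → i ≤ 6 →
      b i = 6 * (u + (i : K)) / ((v + (i : K)) * (v + (i : K) + 1))) :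
    Rsys (b 1) (b 2) (b 3) (b 4) (b 5) (b 6) := by
  have h1 := hv 1 (by norm_num) (by norm_num)
  have h2 := hv 2 (by norm_num) (by norm_num)
  have h3 := hv 3 (by norm_num) (by norm_num)
  have h4 := hv 4 (by norm_num) (by norm_num)
  have h5 := hv 5 (by norm_num) (by norm_num)
  have h6 := hv 6 (by norm_num) (by norm_num)
  have h7 := hv 7 (by norm_num) (by norm_num)
  push_cast at h1 h2 h3 h4 h5 h6 h7
  have e1 := hb 1 (by norm_num) (by norm_num)
  have e2 := hb 2 (by norm_num) (by norm_num)
  have e3 := hb 3 (by norm_num) (by norm_num)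
  have e4 := hb 4 (by norm_num) (by norm_num)
  have e5 := hb 5 (by norm_num) (by norm_num)
  have e6 := hb 6 (by norm_num) (by norm_num)
  push_cast at e1 e2 e3 e4 e5 e6
  have h2' : v + 1 + 1 ≠ 0 := by intro h; apply h2; linear_combination h
  have h3' : v + 2 + 1 ≠ 0 := by intro h; apply h3; linear_combination h
  have h4' : v + 3 + 1 ≠ 0 := by intro h; apply h4; linear_combination h
  have h5' : v + 4 + 1 ≠ 0 := by intro h; apply h5; linear_combination h
  have h6' : v + 5 + 1 ≠ 0 := by intro h; apply h6; linear_combination h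
  have h7' : v + 6 + 1 ≠ 0 := by intro h; apply h7; linear_combination h
  rw [e1, e2, e3, e4, e5, e6]
  refine ⟨?_, ?_, ?_, ?_⟩
  · field_simp
    ring
  · field_simp
    ring
  · field_simp
    ring
  · field_simp
    have hDA : (v + 6) * (v + 6 + 1) *
        ((v + 1) * (v + 1 + 1) * ((v + 2) * (v + 2 + 1)) * ((v + 3) * (v + 3 + 1)) *
          ((v + 4) * (v + 4 + 1))) ≠ 0 := by
      repeat first | apply mul_ne_zero | assumption
    have hDB : (v + 1) * (v + 1 + 1) *
        ((v + 3) * (v + 3 + 1) * ((v + 4) * (v + 4 + 1)) * ((v + 5) * (v + 5 + 1)) *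
          ((v + 6) * (v + 6 + 1))) ≠ 0 := by
      repeat first | apply mul_ne_zero | assumption
    have hDE : (v + 1) * (v + 1 + 1) * ((v + 2) * (v + 2 + 1)) * ((v + 3) * (v + 3 + 1)) *
        ((v + 4) * (v + 4 + 1)) ≠ 0 := by
      repeat first | apply mul_ne_zero | assumption
    ring
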